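/- Let F be a differential field of characteristic zero with algebraically closed constants, and let F(y) be a differential field extension with y transcendental over F, the same constants C, and y' = a·y + b for some a, b ∈ F. Assume that (y − c)'/(y − c) ∉ F for every c in the algebraic closure of F. Then every element g ∈ F(y) that is ∞-integrable in F(y) lies in the polynomial ring F[y]. -/

import Mathlib

set_option linter.unusedSectionVars false

open Polynomial

namespace Stmt12Aux

variable {K : Type*} [Field K]

section PolyD

variable (D0 : K →+ K) (w : K[X])

/-- apply `D0` coefficientwise -/
noncomputable def Tc (p : K[X]) : K[X] :=
  ⟨.ofCoeff (Finsupp.mapRange.addMonoidHom D0 p.toFinsupp.coeff)⟩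

@[simp] lemma coeff_Tc (p : K[X]) (n : ℕ) : (Tc D0 p).coeff n = D0 (p.coeff n) := by
  simp [Tc, coeff, Finsupp.mapRange.addMonoidHom]

lemma Tc_add (p q : K[X]) : Tc D0 (p + q) = Tc D0 p + Tc D0 q := by
  ext n; simp

variable (hdm : ∀ x y : K, D0 (x * y) = x * D0 y + D0 x * y)

include hdm in
lemma Tc_mul (p q : K[X]) : Tc D0 (p * q) = Tc D0 p * q + p * Tc D0 q := by
  ext n
  simp only [coeff_Tc, coeff_add, coeff_mul, map_sum, ← Finset.sum_add_distrib]
  exact Finset.sum_congr rfl fun x _ => by rw [hdm]; ring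

include hdm in
lemma D0_one : D0 (1 : K) = 0 := by
  have := hdm 1 1
  simp only [one_mul, mul_one] at this
  exact left_eq_add.mp this

/-- derivation on `K[X]` extending `D0` with `polyD X = w`. -/
noncomputable def polyD (p : K[X]) : K[X] :=
  Tc D0 p + w * derivative p

lemma polyD_add (p q : K[X]) : polyD D0 w (p + q) = polyD D0 w p + polyD D0 w q := by
  simp only [polyD, Tc_add, derivative_add]; ring

include hdm in
lemma polyD_mul (p q : K[X]) :
    polyD D0 w (p * q) = polyD D0 w p * q + p * polyD D0 w q := by
  simp only [polyD, Tc_mul D0 hdm, derivative_mul]; ring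

lemma polyD_C (x : K) : polyD D0 w (C x) = C (D0 x) := by
  have : Tc D0 (C x) = C (D0 x) := by
    ext n
    simp only [coeff_Tc, coeff_C]
    split_ifs <;> simp
  simp [polyD, this]

include hdm in
lemma polyD_one : polyD D0 w (1 : K[X]) = 0 := by
  rw [← C_1, polyD_C, D0_one D0 hdm, C_0]

include hdm in
lemma polyD_X : polyD D0 w X = w := by
  have : Tc D0 X = 0 := by
    ext n
    simp only [coeff_Tc, coeff_X, coeff_zero]
    split_ifs <;> simp [D0_one D0 hdm]
  simp [polyD, this]

include hdm in
lemma polyD_pow (p : K[X]) (j : ℕ) :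
    polyD D0 w (p ^ (j + 1)) = ((j : K[X]) + 1) * p ^ j * polyD D0 w p := by
  induction j with
  | zero => simp
  | succ j ih =>
    rw [pow_succ, polyD_mul D0 w hdm, ih]
    push_cast
    ring

end PolyD


section DR

variable (D0 : K →+ K) (w : K[X])

local notation "rho" => algebraMap K[X] (RatFunc K)

/-- derivation on `RatFunc K` extending `polyD`. -/
noncomputable def DR (r : RatFunc K) : RatFunc K :=
  (rho (polyD D0 w r.num) * rho r.denom - rho r.num * rho (polyD D0 w r.denom)) /
    rho r.denom ^ 2

lemma cross_eq {p q p' q' : K[X]} (hq : q ≠ 0) (hq' : q' ≠ 0)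
    (h : rho p / rho q = rho p' / rho q') : p * q' = p' * q := by
  rw [div_eq_div_iff (RatFunc.algebraMap_ne_zero hq) (RatFunc.algebraMap_ne_zero hq'),
    ← map_mul, ← map_mul] at h
  exact RatFunc.algebraMap_injective K h

variable (hdm : ∀ x y : K, D0 (x * y) = x * D0 y + D0 x * y)

include hdm in
lemma DR_div (p q : K[X]) (hq : q ≠ 0) :
    DR D0 w (rho p / rho q) =
      (rho (polyD D0 w p) * rho q - rho p * rho (polyD D0 w q)) / rho q ^ 2 := by
  set r : RatFunc K := rho p / rho q with hr
  have h2 : r.num * q = p * r.denom :=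
    cross_eq (RatFunc.denom_ne_zero r) hq (by rw [RatFunc.num_div_denom])
  have h3 : polyD D0 w r.num * q + r.num * polyD D0 w q
      = polyD D0 w p * r.denom + p * polyD D0 w r.denom := by
    have := congrArg (polyD D0 w) h2
    rwa [polyD_mul D0 w hdm, polyD_mul D0 w hdm] at this
  have key : (polyD D0 w r.num * r.denom - r.num * polyD D0 w r.denom) * q ^ 2
      = (polyD D0 w p * q - p * polyD D0 w q) * r.denom ^ 2 := by
    linear_combination (r.denom * q) * h3 -
      (polyD D0 w r.denom * q + polyD D0 w q * r.denom) * h2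
  rw [DR, div_eq_div_iff (pow_ne_zero 2 (RatFunc.algebraMap_ne_zero (RatFunc.denom_ne_zero r)))
    (pow_ne_zero 2 (RatFunc.algebraMap_ne_zero hq))]
  simpa only [map_mul, map_sub, map_pow] using congrArg rho key

include hdm in
lemma DR_algebraMap (p : K[X]) : DR D0 w (rho p) = rho (polyD D0 w p) := by
  have h1 : rho p = rho p / rho 1 := by simp
  rw [h1, DR_div D0 w hdm p 1 one_ne_zero, polyD_one D0 w hdm]
  simp

include hdm in
lemma DR_add (r s : RatFunc K) : DR D0 w (r + s) = DR D0 w r + DR D0 w s := by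
  obtain ⟨n1, d1, hd1, hr⟩ : ∃ n d, d ≠ 0 ∧ r = rho n / rho d :=
    ⟨r.num, r.denom, RatFunc.denom_ne_zero r, (RatFunc.num_div_denom r).symm⟩
  obtain ⟨n2, d2, hd2, hs⟩ : ∃ n d, d ≠ 0 ∧ s = rho n / rho d :=
    ⟨s.num, s.denom, RatFunc.denom_ne_zero s, (RatFunc.num_div_denom s).symm⟩
  have hsum : r + s = rho (n1 * d2 + n2 * d1) / rho (d1 * d2) := by
    rw [hr, hs, div_add_div _ _ (RatFunc.algebraMap_ne_zero hd1)
      (RatFunc.algebraMap_ne_zero hd2), ← map_mul, ← map_mul, ← map_mul, ← map_add]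
    ring_nf
  rw [hsum, hr, hs, DR_div D0 w hdm _ _ (mul_ne_zero hd1 hd2), DR_div D0 w hdm _ _ hd1,
    DR_div D0 w hdm _ _ hd2]
  simp only [polyD_add, polyD_mul D0 w hdm, map_add, map_mul]
  have h1 : rho d1 ≠ 0 := RatFunc.algebraMap_ne_zero hd1
  have h2 : rho d2 ≠ 0 := RatFunc.algebraMap_ne_zero hd2
  field_simp
  ring

include hdm in
lemma DR_mul (r s : RatFunc K) : DR D0 w (r * s) = r * DR D0 w s + DR D0 w r * s := by
  obtain ⟨n1, d1, hd1, hr⟩ : ∃ n d, d ≠ 0 ∧ r = rho n / rho d :=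
    ⟨r.num, r.denom, RatFunc.denom_ne_zero r, (RatFunc.num_div_denom r).symm⟩
  obtain ⟨n2, d2, hd2, hs⟩ : ∃ n d, d ≠ 0 ∧ s = rho n / rho d :=
    ⟨s.num, s.denom, RatFunc.denom_ne_zero s, (RatFunc.num_div_denom s).symm⟩
  have hprod : r * s = rho (n1 * n2) / rho (d1 * d2) := by
    rw [hr, hs, div_mul_div_comm, ← map_mul, ← map_mul]
  rw [hprod, hr, hs, DR_div D0 w hdm _ _ (mul_ne_zero hd1 hd2), DR_div D0 w hdm _ _ hd1,
    DR_div D0 w hdm _ _ hd2]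
  simp only [polyD_add, polyD_mul D0 w hdm, map_add, map_mul]
  have h1 : rho d1 ≠ 0 := RatFunc.algebraMap_ne_zero hd1
  have h2 : rho d2 ≠ 0 := RatFunc.algebraMap_ne_zero hd2
  field_simp
  ring

end DR


section Local

variable [CharZero K] (D0 : K →+ K) (a b : K)

local notation "rho" => algebraMap K[X] (RatFunc K)
local notation "W" => C a * X + C b

variable (hdm : ∀ x y : K, D0 (x * y) = x * D0 y + D0 x * y)

include hdm in
lemma polyD_X_sub_C (c : K) :
    polyD D0 W (X - C c) = C a * (X - C c) + C (a * c + b - D0 c) := by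
  have h1 : X - C c = X + C (-c) := by rw [map_neg]; ring
  rw [h1, polyD_add, polyD_X D0 W hdm, polyD_C]
  simp only [map_neg, map_add, map_sub, map_mul]
  ring

/-- `u` has no pole at `c`. -/
def NoPole (c : K) (u : RatFunc K) : Prop :=
  ∃ p q : K[X], q.eval c ≠ 0 ∧ u = rho p / rho q

/-- `u` has a pole of order exactly `j` at `c` (for `j ≥ 1`). -/
def PoleAt (c : K) (j : ℕ) (u : RatFunc K) : Prop :=
  ∃ p q : K[X], p.eval c ≠ 0 ∧ q.eval c ≠ 0 ∧ u = rho p / rho ((X - C c) ^ j * q)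

include hdm in
lemma NoPole.dr {c : K} {u : RatFunc K} (h : NoPole c u) : NoPole c (DR D0 W u) := by
  obtain ⟨p, q, hq, rfl⟩ := h
  have hq0 : q ≠ 0 := fun h0 => hq (by simp [h0])
  rw [DR_div D0 W hdm p q hq0]
  exact ⟨polyD D0 W p * q - p * polyD D0 W q, q ^ 2, by simpa using pow_ne_zero 2 hq,
    by simp only [map_sub, map_mul, map_pow]⟩

include hdm in
lemma PoleAt.dr {c : K} (hδ : a * c + b - D0 c ≠ 0) {j : ℕ} (hj : 1 ≤ j) {u : RatFunc K}
    (h : PoleAt c j u) : PoleAt c (j + 1) (DR D0 W u) := by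
  obtain ⟨p, q, hp, hq, rfl⟩ := h
  obtain ⟨j', rfl⟩ : ∃ j', j = j' + 1 := ⟨j - 1, (Nat.succ_pred_eq_of_pos hj).symm⟩
  set t : K[X] := X - C c with ht_def
  set δ : K := a * c + b - D0 c with hδ_def
  have ht : t ≠ 0 := X_sub_C_ne_zero c
  have hq0 : q ≠ 0 := fun h0 => hq (by simp [h0])
  have hQ : t ^ (j' + 1) * q ≠ 0 := mul_ne_zero (pow_ne_zero _ ht) hq0
  rw [DR_div D0 W hdm _ _ hQ]
  set N1 : K[X] := polyD D0 W p * (t * q) -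
    p * (((j' : K[X]) + 1) * (C a * t + C δ) * q + t * polyD D0 W q) with hN1
  have hnum : polyD D0 W p * (t ^ (j' + 1) * q) - p * polyD D0 W (t ^ (j' + 1) * q)
      = t ^ j' * N1 := by
    rw [polyD_mul D0 W hdm, polyD_pow D0 W hdm, polyD_X_sub_C D0 a b hdm c, hN1]
    ring
  have hden : (t ^ (j' + 1) * q) ^ 2 = t ^ j' * (t ^ (j' + 1 + 1) * q ^ 2) := by ring
  refine ⟨N1, q ^ 2, ?_, by simpa using pow_ne_zero 2 hq, ?_⟩
  · have hev : N1.eval c = -(((j' : K) + 1) * δ * (p.eval c * q.eval c)) := by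
      simp only [hN1, eval_sub, eval_mul, eval_add, eval_natCast, eval_one, eval_C, eval_X,
        ht_def, sub_self, eval_pow]
      ring
    rw [hev]
    refine neg_ne_zero.mpr (mul_ne_zero (mul_ne_zero ?_ hδ) (mul_ne_zero hp hq))
    exact Nat.cast_add_one_ne_zero j'
  · have e1 : rho (polyD D0 W p) * rho (t ^ (j' + 1) * q)
        - rho p * rho (polyD D0 W (t ^ (j' + 1) * q)) = rho (t ^ j') * rho N1 := by
      rw [← map_mul, ← map_mul, ← map_sub, hnum, map_mul]
    have e2 : rho (t ^ (j' + 1) * q) ^ 2 = rho (t ^ j') * rho (t ^ (j' + 1 + 1) * q ^ 2) := by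
      rw [← map_pow, ← map_mul, hden]
    rw [e1, e2, mul_div_mul_left _ _ (RatFunc.algebraMap_ne_zero (pow_ne_zero j' ht))]

include hdm in
lemma NoPole.dr_iterate {c : K} {u : RatFunc K} (h : NoPole c u) (n : ℕ) :
    NoPole c ((DR D0 W)^[n] u) := by
  induction n with
  | zero => simpa using h
  | succ n ih => rw [Function.iterate_succ_apply']; exact ih.dr D0 a b hdm

include hdm in
lemma PoleAt.dr_iterate {c : K} (hδ : a * c + b - D0 c ≠ 0) {j : ℕ} (hj : 1 ≤ j)
    {u : RatFunc K} (h : PoleAt c j u) (n : ℕ) : PoleAt c (j + n) ((DR D0 W)^[n] u) := by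
  induction n with
  | zero => simpa using h
  | succ n ih =>
    rw [Function.iterate_succ_apply', ← Nat.add_assoc]
    exact ih.dr D0 a b hdm hδ (le_trans hj (Nat.le_add_right j n))

lemma pole_or_noPole (c : K) (u : RatFunc K) :
    NoPole c u ∨ ∃ j, 1 ≤ j ∧ PoleAt c j u := by
  classical
  obtain ⟨q1, hq1eq, hq1⟩ :=
    Polynomial.exists_eq_pow_rootMultiplicity_mul_and_not_dvd u.denom
      (RatFunc.denom_ne_zero u) c
  have hq1c : q1.eval c ≠ 0 := fun h0 => hq1 (dvd_iff_isRoot.mpr h0)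
  rcases Nat.eq_zero_or_pos (rootMultiplicity c u.denom) with hm | hm
  · left
    refine ⟨u.num, u.denom, ?_, (RatFunc.num_div_denom u).symm⟩
    rw [hq1eq, hm, pow_zero, one_mul]
    exact hq1c
  · right
    refine ⟨rootMultiplicity c u.denom, hm, u.num, q1, ?_, hq1c, ?_⟩
    · intro h0
      obtain ⟨A, B, hAB⟩ := RatFunc.isCoprime_num_denom u
      have hd : u.denom.eval c = 0 := by
        rw [hq1eq, eval_mul, eval_pow, eval_sub, eval_X, eval_C, sub_self,
          zero_pow hm.ne', zero_mul]
      have := congrArg (fun p : K[X] => p.eval c) hAB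
      simp [h0, hd] at this
    · conv_lhs => rw [← RatFunc.num_div_denom u, hq1eq]

include hdm in
lemma local_contradiction {c : K} (hδ : a * c + b - D0 c ≠ 0) (g : RatFunc K)
    (P Q : K[X]) (hP : P.eval c ≠ 0) (hQ : Q.eval c ≠ 0) (k : ℕ) (hk : 1 ≤ k)
    (hgeq : g = rho P / rho ((X - C c) ^ k * Q))
    (η : RatFunc K) (hη : (DR D0 W)^[k] η = g) : False := by
  set t : K[X] := X - C c with ht_def
  have ht : t ≠ 0 := X_sub_C_ne_zero c
  have htc : t.eval c = 0 := by simp [ht_def]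
  have hQ0 : t ^ k * Q ≠ 0 :=
    mul_ne_zero (pow_ne_zero _ ht) (fun h0 => hQ (by simp [h0]))
  rcases pole_or_noPole c η with hnp | ⟨j, hj, hpole⟩
  · have hg : NoPole c g := hη ▸ hnp.dr_iterate D0 a b hdm k
    obtain ⟨p', q', hq', hge'⟩ := hg
    have hq'0 : q' ≠ 0 := fun h0 => hq' (by simp [h0])
    have hcross : P * q' = p' * (t ^ k * Q) :=
      cross_eq hQ0 hq'0 (hgeq ▸ hge')
    have := congrArg (fun p : K[X] => p.eval c) hcross
    obtain ⟨k', rfl⟩ : ∃ k', k = k' + 1 := ⟨k - 1, (Nat.succ_pred_eq_of_pos hk).symm⟩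
    simp only [eval_mul, eval_pow, htc] at this
    simp only [zero_pow (Nat.succ_ne_zero k'), zero_mul, mul_zero] at this
    exact hP (mul_eq_zero.mp this |>.resolve_right hq')
  · have hg : PoleAt c (j + k) g := hη ▸ hpole.dr_iterate D0 a b hdm hδ hj k
    obtain ⟨p2, q2, hp2, hq2, hge2⟩ := hg
    have hq20 : t ^ (j + k) * q2 ≠ 0 :=
      mul_ne_zero (pow_ne_zero _ ht) (fun h0 => hq2 (by simp [h0]))
    have hcross : P * (t ^ (j + k) * q2) = p2 * (t ^ k * Q) :=
      cross_eq hQ0 hq20 (hgeq ▸ hge2)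
    have h2 : t ^ k * (P * (t ^ j * q2)) = t ^ k * (p2 * Q) := by
      linear_combination hcross
    have h3 : P * (t ^ j * q2) = p2 * Q := mul_left_cancel₀ (pow_ne_zero k ht) h2
    have := congrArg (fun p : K[X] => p.eval c) h3
    obtain ⟨j', rfl⟩ : ∃ j', j = j' + 1 := ⟨j - 1, (Nat.succ_pred_eq_of_pos hj).symm⟩
    simp only [eval_mul, eval_pow, htc] at this
    simp only [zero_pow (Nat.succ_ne_zero j'), zero_mul, mul_zero] at this
    exact hp2 ((mul_eq_zero.mp this.symm).resolve_right hQ)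
end Local


section Unique

variable {F E : Type*} [Field F] [Field E] [Algebra F E]

lemma D_zero (D : E → E) (ha : ∀ x y, D (x + y) = D x + D y) : D 0 = 0 := by
  have := ha 0 0
  simp only [add_zero] at this
  exact left_eq_add.mp this

lemma D_one (D : E → E) (hm : ∀ x y, D (x * y) = x * D y + D x * y) : D 1 = 0 := by
  have := hm 1 1
  simp only [one_mul, mul_one] at this
  exact left_eq_add.mp this

set_option maxHeartbeats 1000000 in
lemma deriv_eq_on_field (D1 D2 : E → E)
    (h1a : ∀ x y, D1 (x + y) = D1 x + D1 y) (h1m : ∀ x y, D1 (x * y) = x * D1 y + D1 x * y)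
    (h2a : ∀ x y, D2 (x + y) = D2 x + D2 y) (h2m : ∀ x y, D2 (x * y) = x * D2 y + D2 x * y)
    (hF : ∀ x : F, D1 (algebraMap F E x) = D2 (algebraMap F E x))
    {y : E} (hy : D1 y = D2 y)
    (hgen : IntermediateField.adjoin F {y} = ⊤) : ∀ x : E, D1 x = D2 x := by
  intro x
  have hmem : x ∈ IntermediateField.adjoin F {y} := by rw [hgen]; exact IntermediateField.mem_top
  induction hmem using IntermediateField.adjoin_induction with
  | mem z hz =>
    rw [Set.mem_singleton_iff] at hz
    subst hz; exact hy
  | algebraMap z => exact hF z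
  | add u v hu hv ihu ihv => rw [h1a, h2a, ihu, ihv]
  | inv u hmu ih =>
    rcases eq_or_ne u 0 with rfl | hu0
    · rw [inv_zero, D_zero D1 h1a, D_zero D2 h2a]
    · have e1 : u * D1 u⁻¹ + D1 u * u⁻¹ = 0 := by
        rw [← h1m, mul_inv_cancel₀ hu0, D_one D1 h1m]
      have e2 : u * D2 u⁻¹ + D2 u * u⁻¹ = 0 := by
        rw [← h2m, mul_inv_cancel₀ hu0, D_one D2 h2m]
      have h3 : u * D1 u⁻¹ = u * D2 u⁻¹ := by
        linear_combination e1 - e2 - u⁻¹ * ih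
      exact mul_left_cancel₀ hu0 h3
  | mul u v hmu hmv ihu ihv => rw [h1m, h2m, ihu, ihv]

end Unique

end Stmt12Aux

open Stmt12Aux

/-- let `F(y)` be a differential field extension with `y`
transcendental, same constants, and `y' = a·y + b`; if `a·c + b − c' ≠ 0` for
every `c` in the algebraic closure of `F` (i.e. `(y−c)'/(y−c) ∉ F` for all
such `c`), then every ∞-integrable element of `F(y)` lies in `F[y]`. -/
theorem stmt_12 (F E Falg : Type*) [Field F] [Field E] [Field Falg]
    [Algebra F E] [Algebra F Falg] [IsAlgClosure F Falg] [CharZero F]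
    (DF : F → F)
    (hFadd : ∀ a b : F, DF (a + b) = DF a + DF b)
    (hFmul : ∀ a b : F, DF (a * b) = a * DF b + DF a * b)
    (DE : E → E)
    (hEadd : ∀ a b : E, DE (a + b) = DE a + DE b)
    (hEmul : ∀ a b : E, DE (a * b) = a * DE b + DE a * b)
    (hcompat : ∀ a : F, DE (algebraMap F E a) = algebraMap F E (DF a))
    (Dalg : Falg → Falg)
    (halgadd : ∀ a b : Falg, Dalg (a + b) = Dalg a + Dalg b)
    (halgmul : ∀ a b : Falg, Dalg (a * b) = a * Dalg b + Dalg a * b)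
    (halgcompat : ∀ a : F, Dalg (algebraMap F Falg a) = algebraMap F Falg (DF a))
    -- the field of constants of F is algebraically closed
    (hCalg : ∀ p : Polynomial F, 0 < p.degree → (∀ i, DF (p.coeff i) = 0) →
      ∃ r : F, DF r = 0 ∧ p.eval r = 0)
    (y : E) (hytr : Transcendental F y)
    (hgen : IntermediateField.adjoin F {y} = ⊤)
    (hconst : ∀ e : E, DE e = 0 → ∃ c : F, DF c = 0 ∧ algebraMap F E c = e)
    (a b : F)
    (hy' : DE y = algebraMap F E a * y + algebraMap F E b)
    (hc : ∀ c : Falg, algebraMap F Falg a * c + algebraMap F Falg b - Dalg c ≠ 0)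
    (g : E) (hg : ∀ n : ℕ, 1 ≤ n → ∃ η : E, DE^[n] η = g) :
    g ∈ Algebra.adjoin F {y} := by
  classical
  haveI : IsAlgClosed Falg := IsAlgClosure.isAlgClosed F
  haveI : CharZero Falg := charZero_of_injective_algebraMap (algebraMap F Falg).injective
  set DF0 : F →+ F := AddMonoidHom.mk' DF hFadd with hDF0
  set Dal : Falg →+ Falg := AddMonoidHom.mk' Dalg halgadd with hDal
  have hdmF : ∀ x z : F, DF0 (x * z) = x * DF0 z + DF0 x * z := hFmul
  have hdmA : ∀ x z : Falg, Dal (x * z) = x * Dal z + Dal x * z := halgmul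
  have hinj : Function.Injective (Polynomial.aeval y : Polynomial F →ₐ[F] E) :=
    transcendental_iff_injective.mp hytr
  set e0 : RatFunc F →ₐ[F] E :=
    RatFunc.liftAlgHom (Polynomial.aeval y)
      (nonZeroDivisors_le_comap_nonZeroDivisors_of_injective _ hinj) with he0def
  have he0p : ∀ p : Polynomial F, e0 (algebraMap _ _ p) = Polynomial.aeval y p := by
    intro p
    have h := RatFunc.liftAlgHom_apply_div (Polynomial.aeval y)
      (nonZeroDivisors_le_comap_nonZeroDivisors_of_injective _ hinj) p 1
    simpa using h
  have he0inj : Function.Injective e0 := e0.toRingHom.injective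
  have hy_in : y ∈ e0.fieldRange :=
    AlgHom.mem_fieldRange.mpr
      ⟨algebraMap _ _ Polynomial.X, by rw [he0p, Polynomial.aeval_X]⟩
  have he0surj : Function.Surjective e0 := by
    intro x
    have hle : IntermediateField.adjoin F {y} ≤ e0.fieldRange :=
      IntermediateField.adjoin_le_iff.mpr (Set.singleton_subset_iff.mpr hy_in)
    rw [hgen] at hle
    exact (AlgHom.mem_fieldRange).mp (hle IntermediateField.mem_top)
  set e : RatFunc F ≃ₐ[F] E := AlgEquiv.ofBijective e0 ⟨he0inj, he0surj⟩ with hedef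
  have heap : ∀ r, e r = e0 r := fun r => rfl
  have halgF : ∀ x : F, algebraMap F (RatFunc F) x
      = algebraMap (Polynomial F) (RatFunc F) (Polynomial.C x) := fun x => by
    rw [IsScalarTower.algebraMap_apply F (Polynomial F) (RatFunc F), Polynomial.algebraMap_eq]
  -- DE is the transport of the explicit derivation on `RatFunc F`
  have hDE : ∀ x : E, DE x
      = e (DR DF0 (Polynomial.C a * Polynomial.X + Polynomial.C b) (e.symm x)) := by
    refine deriv_eq_on_field DE _ hEadd hEmul ?_ ?_ ?_ ?_ hgen
    · intro x z
      rw [map_add, DR_add DF0 _ hdmF, map_add]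
    · intro x z
      rw [map_mul, DR_mul DF0 _ hdmF, map_add, map_mul, map_mul,
        AlgEquiv.apply_symm_apply, AlgEquiv.apply_symm_apply]
    · intro x
      have h1 : e.symm (algebraMap F E x) = algebraMap F (RatFunc F) x := e.symm.commutes x
      rw [h1, halgF, DR_algebraMap DF0 _ hdmF, polyD_C, ← halgF, AlgEquiv.commutes, hcompat]
      rfl
    · have hyX : e (algebraMap (Polynomial F) (RatFunc F) Polynomial.X) = y := by
        rw [heap, he0p, Polynomial.aeval_X]
      have hsymmy : e.symm y = algebraMap (Polynomial F) (RatFunc F) Polynomial.X := by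
        rw [← hyX, AlgEquiv.symm_apply_apply]
      rw [hsymmy, DR_algebraMap DF0 _ hdmF, polyD_X DF0 _ hdmF, hy', heap, he0p]
      simp only [map_add, map_mul, Polynomial.aeval_C, Polynomial.aeval_X]
  -- map everything into `RatFunc Falg`
  have hφainj : Function.Injective (Polynomial.mapRingHom (algebraMap F Falg)) := by
    rw [Polynomial.coe_mapRingHom]
    exact Polynomial.map_injective _ (algebraMap F Falg).injective
  set jm : RatFunc F →+* RatFunc Falg :=
    RatFunc.mapRingHom (Polynomial.mapRingHom (algebraMap F Falg))
      (nonZeroDivisors_le_comap_nonZeroDivisors_of_injective _ hφainj) with hjmdef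
  have hjdiv : ∀ p q : Polynomial F,
      jm (algebraMap _ _ p / algebraMap _ _ q)
        = algebraMap _ _ (p.map (algebraMap F Falg))
          / algebraMap _ _ (q.map (algebraMap F Falg)) := by
    intro p q
    have h := RatFunc.map_apply_div (Polynomial.mapRingHom (algebraMap F Falg))
      (nonZeroDivisors_le_comap_nonZeroDivisors_of_injective _ hφainj) p q
    exact h
  have hjp : ∀ p : Polynomial F,
      jm (algebraMap _ _ p) = algebraMap _ _ (p.map (algebraMap F Falg)) := by
    intro p
    have h := hjdiv p 1
    simpa using h
  -- `polyD` commutes with coefficient maps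
  have hpolymap : ∀ p : Polynomial F,
      (polyD DF0 (Polynomial.C a * Polynomial.X + Polynomial.C b) p).map (algebraMap F Falg)
        = polyD Dal (Polynomial.C (algebraMap F Falg a) * Polynomial.X
            + Polynomial.C (algebraMap F Falg b)) (p.map (algebraMap F Falg)) := by
    intro p
    unfold polyD
    rw [Polynomial.map_add, Polynomial.map_mul, Polynomial.derivative_map]
    congr 1
    · ext n
      rw [Polynomial.coeff_map, coeff_Tc, coeff_Tc, Polynomial.coeff_map]
      exact (halgcompat _).symm
    · congr 1
      simp only [Polynomial.map_add, Polynomial.map_mul, Polynomial.map_C, Polynomial.map_X]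
  -- `jm` intertwines the two derivations
  have hjD : ∀ r : RatFunc F,
      jm (DR DF0 (Polynomial.C a * Polynomial.X + Polynomial.C b) r)
        = DR Dal (Polynomial.C (algebraMap F Falg a) * Polynomial.X
            + Polynomial.C (algebraMap F Falg b)) (jm r) := by
    intro r
    have hd0 : r.denom ≠ 0 := RatFunc.denom_ne_zero r
    have hdA : r.denom.map (algebraMap F Falg) ≠ 0 := Polynomial.map_ne_zero hd0
    conv_lhs => rw [← RatFunc.num_div_denom r, DR_div DF0 _ hdmF _ _ hd0]
    conv_rhs => rw [← RatFunc.num_div_denom r]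
    rw [hjdiv, DR_div Dal _ hdmA _ _ hdA, map_div₀, map_sub, map_mul, map_mul, map_pow,
      hjp, hjp, hjp, hjp, hpolymap, hpolymap]
  -- transported iterates
  have hψD : ∀ x : E, jm (e.symm (DE x))
      = DR Dal (Polynomial.C (algebraMap F Falg a) * Polynomial.X
          + Polynomial.C (algebraMap F Falg b)) (jm (e.symm x)) := by
    intro x
    rw [hDE x, AlgEquiv.symm_apply_apply, hjD]
  have hψiter : ∀ (n : ℕ) (x : E), jm (e.symm (DE^[n] x))
      = (DR Dal (Polynomial.C (algebraMap F Falg a) * Polynomial.X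
          + Polynomial.C (algebraMap F Falg b)))^[n] (jm (e.symm x)) := by
    intro n
    induction n with
    | zero => intro x; simp
    | succ n ih =>
      intro x
      rw [Function.iterate_succ_apply', Function.iterate_succ_apply', hψD, ih]
  -- the denominator of `g` must be trivial
  have hd0ne : (e.symm g).denom ≠ 0 := RatFunc.denom_ne_zero _
  have hkey : (e.symm g).denom.degree ≤ 0 := by
    by_contra hdeg
    push_neg at hdeg
    have hd0Ane : (e.symm g).denom.map (algebraMap F Falg) ≠ 0 := Polynomial.map_ne_zero hd0ne
    have hdegA : ((e.symm g).denom.map (algebraMap F Falg)).degree ≠ 0 := by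
      rw [Polynomial.degree_map_eq_of_injective (algebraMap F Falg).injective]
      exact hdeg.ne'
    obtain ⟨c, hcroot⟩ := IsAlgClosed.exists_root _ hdegA
    set k := Polynomial.rootMultiplicity c ((e.symm g).denom.map (algebraMap F Falg)) with hkdef
    have hk1 : 1 ≤ k :=
      (Polynomial.rootMultiplicity_pos hd0Ane).mpr hcroot
    obtain ⟨q1, hq1eq, hq1nd⟩ :=
      Polynomial.exists_eq_pow_rootMultiplicity_mul_and_not_dvd
        ((e.symm g).denom.map (algebraMap F Falg)) hd0Ane c
    rw [← hkdef] at hq1eq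
    have hq1c : q1.eval c ≠ 0 := fun h0 => hq1nd (Polynomial.dvd_iff_isRoot.mpr h0)
    have hn0c : ((e.symm g).num.map (algebraMap F Falg)).eval c ≠ 0 := by
      intro h0
      obtain ⟨A0, B0, hAB⟩ :=
        (RatFunc.isCoprime_num_denom (e.symm g)).map (Polynomial.mapRingHom (algebraMap F Falg))
      simp only [Polynomial.coe_mapRingHom] at hAB
      have hdc : ((e.symm g).denom.map (algebraMap F Falg)).eval c = 0 := hcroot
      have h9 := congrArg (Polynomial.eval c) hAB
      simp only [Polynomial.eval_add, Polynomial.eval_mul, h0, hdc, Polynomial.eval_one,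
        mul_zero, add_zero, zero_add] at h9
      exact one_ne_zero h9.symm
    have hgψ : jm (e.symm g)
        = algebraMap _ _ ((e.symm g).num.map (algebraMap F Falg))
          / algebraMap _ _ ((Polynomial.X - Polynomial.C c) ^ k * q1) := by
      conv_lhs => rw [← RatFunc.num_div_denom (e.symm g)]
      rw [hjdiv, hq1eq]
    obtain ⟨η, hη⟩ := hg k hk1
    refine local_contradiction Dal (algebraMap F Falg a) (algebraMap F Falg b) hdmA
      ?_ (jm (e.symm g)) _ q1 hn0c hq1c k hk1 hgψ (jm (e.symm η)) ?_
    · exact hc c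
    · rw [← hψiter k η, hη]
  -- conclude
  have hdC : (e.symm g).denom = Polynomial.C ((e.symm g).denom.coeff 0) :=
    Polynomial.eq_C_of_degree_le_zero hkey
  set u : F := (e.symm g).denom.coeff 0 with hudef
  have hu0 : u ≠ 0 := fun h => hd0ne (by rw [hdC, h, Polynomial.C_0])
  have hCune : (Polynomial.C u : Polynomial F) ≠ 0 := fun h => hu0 (by
    have := congrArg (fun p : Polynomial F => p.coeff 0) h
    simpa using this)
  have hgF : algebraMap (Polynomial F) (RatFunc F)
      (Polynomial.C u⁻¹ * (e.symm g).num) = e.symm g := by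
    rw [map_mul]
    conv_rhs => rw [← RatFunc.num_div_denom (e.symm g), hdC]
    rw [eq_div_iff (RatFunc.algebraMap_ne_zero hCune), ← map_mul, ← map_mul]
    congr 1
    rw [mul_comm (Polynomial.C u⁻¹) _, mul_assoc, ← Polynomial.C_mul,
      inv_mul_cancel₀ hu0, Polynomial.C_1, mul_one]
  rw [Algebra.adjoin_singleton_eq_range_aeval]
  refine ⟨Polynomial.C u⁻¹ * (e.symm g).num, ?_⟩
  calc (Polynomial.aeval y) (Polynomial.C u⁻¹ * (e.symm g).num)
      = e0 (algebraMap _ _ (Polynomial.C u⁻¹ * (e.symm g).num)) := (he0p _).symm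
    _ = e (algebraMap _ _ (Polynomial.C u⁻¹ * (e.symm g).num)) := (heap _).symm
    _ = e (e.symm g) := by rw [hgF]
    _ = g := e.apply_symm_apply g
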